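/- arXiv:1303.4179 — 2 statements merged into one kernel-verified Lean document; each statement's English description precedes it below -/
import Mathlib

section
/- As h → 0⁺, the integral ∫_{[-1,1]²} (4h²/w₁²) sin²(w₁/h) (1 + w₁²/h²)² (1 + w₂²/h²)² dw₁ dw₂ equals 8/(15h⁶) + o(h⁻⁶). -/
open Asymptotics Filter

open Real intervalIntegral MeasureTheory in
private lemma intB_A3 (h : ℝ) (hh : h ≠ 0) :
    ∫ w in (-1:ℝ)..1, Real.sin (w/h)^2 = 1 - h/2 * Real.sin (2/h) := by
  have key : ∀ w ∈ Set.uIcc (-1:ℝ) 1,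
      HasDerivAt (fun w => w/2 - h/4 * Real.sin (2*w/h)) (Real.sin (w/h)^2) w := by
    intro w _
    have h1 : HasDerivAt (fun w : ℝ => 2*w/h) (2/h) w := by
      simpa using ((hasDerivAt_id w).const_mul 2).div_const h
    have h2 : HasDerivAt (fun w : ℝ => Real.sin (2*w/h)) (Real.cos (2*w/h) * (2/h)) w :=
      h1.sin
    have h3 := ((hasDerivAt_id w).div_const 2).sub (h2.const_mul (h/4))
    refine h3.congr_deriv ?_
    rw [Real.sin_sq_eq_half_sub]
    have : 2 * (w/h) = 2*w/h := by ring
    rw [this]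
    field_simp
    ring
  rw [intervalIntegral.integral_eq_sub_of_hasDerivAt key
    ((by fun_prop : Continuous fun w : ℝ => Real.sin (w/h)^2).intervalIntegrable _ _)]
  have : Real.sin (2*(-1:ℝ)/h) = - Real.sin (2/h) := by
    rw [show (2*(-1:ℝ)/h) = -(2/h) by ring, Real.sin_neg]
  rw [this]
  ring

open Real intervalIntegral MeasureTheory in
private lemma intC_A3 (h : ℝ) (hh : h ≠ 0) :
    ∫ w in (-1:ℝ)..1, w^2 * Real.sin (w/h)^2
      = 1/3 - h/2 * Real.sin (2/h) - h^2/2 * Real.cos (2/h) + h^3/4 * Real.sin (2/h) := by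
  have key : ∀ w ∈ Set.uIcc (-1:ℝ) 1,
      HasDerivAt (fun w => w^3/6 - h/4 * (w^2 * Real.sin (2*w/h))
          - h^2/4 * (w * Real.cos (2*w/h)) + h^3/8 * Real.sin (2*w/h))
        (w^2 * Real.sin (w/h)^2) w := by
    intro w _
    have h1 : HasDerivAt (fun w : ℝ => 2*w/h) (2/h) w := by
      simpa using ((hasDerivAt_id w).const_mul 2).div_const h
    have hs : HasDerivAt (fun w : ℝ => Real.sin (2*w/h)) (Real.cos (2*w/h) * (2/h)) w :=
      h1.sin
    have hc : HasDerivAt (fun w : ℝ => Real.cos (2*w/h)) (-Real.sin (2*w/h) * (2/h)) w :=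
      h1.cos
    have hw2 : HasDerivAt (fun w : ℝ => w^2) (2*w) w := by
      simpa using hasDerivAt_pow 2 w
    have hw3 : HasDerivAt (fun w : ℝ => w^3) (3*w^2) w := by
      simpa using hasDerivAt_pow 3 w
    have h3 := (((hw3.div_const 6).sub
        (((hw2.mul hs)).const_mul (h/4))).sub
        (((hasDerivAt_id w).mul hc).const_mul (h^2/4))).add
        (hs.const_mul (h^3/8))
    refine h3.congr_deriv ?_
    rw [Real.sin_sq_eq_half_sub]
    have : 2 * (w/h) = 2*w/h := by ring
    rw [this]
    simp only [id]
    field_simp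
    ring
  rw [intervalIntegral.integral_eq_sub_of_hasDerivAt key
    ((by fun_prop : Continuous fun w : ℝ => w^2 * Real.sin (w/h)^2).intervalIntegrable _ _)]
  have e1 : Real.sin (2*(-1:ℝ)/h) = - Real.sin (2/h) := by
    rw [show (2*(-1:ℝ)/h) = -(2/h) by ring, Real.sin_neg]
  have e2 : Real.cos (2*(-1:ℝ)/h) = Real.cos (2/h) := by
    rw [show (2*(-1:ℝ)/h) = -(2/h) by ring, Real.cos_neg]
  rw [e1, e2]
  ring

open Real intervalIntegral MeasureTheory in
private lemma intG_A3 (h : ℝ) (hh : h ≠ 0) :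
    ∫ w in (-1:ℝ)..1, (1 + w^2/h^2)^2 = 2 + 4/(3*h^2) + 2/(5*h^4) := by
  have key : ∀ w ∈ Set.uIcc (-1:ℝ) 1,
      HasDerivAt (fun w => w + 2*w^3/(3*h^2) + w^5/(5*h^4)) ((1 + w^2/h^2)^2) w := by
    intro w _
    have hw3 : HasDerivAt (fun w : ℝ => w^3) (3*w^2) w := by
      simpa using hasDerivAt_pow 3 w
    have hw5 : HasDerivAt (fun w : ℝ => w^5) (5*w^4) w := by
      simpa using hasDerivAt_pow 5 w
    have h3 := ((hasDerivAt_id w).add ((hw3.const_mul 2).div_const (3*h^2))).add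
        (hw5.div_const (5*h^4))
    refine h3.congr_deriv ?_
    field_simp
    ring
  rw [intervalIntegral.integral_eq_sub_of_hasDerivAt key
    ((by fun_prop : Continuous fun w : ℝ => (1 + w^2/h^2)^2).intervalIntegrable _ _)]
  ring

open Real intervalIntegral MeasureTheory in
private lemma sinc_sq_le_A3 (h w : ℝ) : Real.sin (w/h)^2 / w^2 ≤ 1/h^2 := by
  rcases eq_or_ne w 0 with rfl|hw
  · simpa using div_nonneg zero_le_one (sq_nonneg h)
  rcases eq_or_ne h 0 with rfl|hh
  · simp
  have h1 : Real.sin (w/h)^2 ≤ (w/h)^2 := by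
    calc Real.sin (w/h)^2 = |Real.sin (w/h)|^2 := (sq_abs _).symm
    _ ≤ |w/h|^2 := pow_le_pow_left₀ (abs_nonneg _) abs_sin_le_abs 2
    _ = (w/h)^2 := sq_abs _
  calc Real.sin (w/h)^2/w^2 ≤ (w/h)^2/w^2 :=
        div_le_div_of_nonneg_right h1 (by positivity) |>.trans_eq rfl
  _ = 1/h^2 := by field_simp

open Real intervalIntegral MeasureTheory in
private lemma intble_sinc_A3 (h : ℝ) : IntervalIntegrable (fun w => Real.sin (w/h)^2/w^2)
    MeasureTheory.volume (-1) 1 := by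
  rw [intervalIntegrable_iff]
  have hc : IntegrableOn (fun _ : ℝ => 1/h^2) (Set.uIoc (-1:ℝ) 1) volume := by
    rw [← intervalIntegrable_iff]; exact intervalIntegrable_const
  apply hc.mono' ?_ ?_
  · apply Measurable.aestronglyMeasurable
    exact ((Real.measurable_sin.comp (measurable_id.div_const h)).pow_const 2).div
      (measurable_id.pow_const 2)
  · filter_upwards with w
    rw [Real.norm_eq_abs, abs_of_nonneg (by positivity)]
    exact sinc_sq_le_A3 h w

open Real intervalIntegral MeasureTheory in
private lemma A_nonneg_A3 (h : ℝ) : 0 ≤ ∫ w in (-1:ℝ)..1, Real.sin (w/h)^2/w^2 :=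
  intervalIntegral.integral_nonneg (by norm_num) (fun u _ => by positivity)

open Real intervalIntegral MeasureTheory in
private lemma A_le_A3 (h : ℝ) : (∫ w in (-1:ℝ)..1, Real.sin (w/h)^2/w^2) ≤ 2/h^2 := by
  have := intervalIntegral.integral_mono_on (μ := volume) (by norm_num : (-1:ℝ) ≤ 1)
    (intble_sinc_A3 h) intervalIntegrable_const (fun w _ => sinc_sq_le_A3 h w)
  simpa using this.trans_eq (by simp [intervalIntegral.integral_const]; ring)

open Real intervalIntegral MeasureTheory in
private lemma tendsto_pow_mul_bdd_A3 (k : ℕ) (hk : k ≠ 0) (c : ℝ) (s : ℝ → ℝ)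
    (hs : ∀ x, |s x| ≤ 1) :
    Tendsto (fun h : ℝ => c * h^k * s h) (nhdsWithin 0 (Set.Ioi 0)) (nhds 0) := by
  apply squeeze_zero_norm (a := fun h : ℝ => |c| * |h|^k)
  · intro h
    rw [Real.norm_eq_abs, abs_mul, abs_mul, abs_pow]
    calc |c| * |h|^k * |s h| ≤ |c| * |h|^k * 1 :=
          mul_le_mul_of_nonneg_left (hs h) (by positivity)
    _ = |c| * |h|^k := by ring
  · have : Tendsto (fun h : ℝ => |c| * |h|^k) (nhds 0) (nhds 0) := by
      have h1 : Continuous (fun h : ℝ => |c| * |h|^k) := by fun_prop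
      have := h1.tendsto (0:ℝ)
      simpa [zero_pow hk] using this
    exact this.mono_left nhdsWithin_le_nhds

open Real intervalIntegral MeasureTheory in
private lemma factor_A3 (h : ℝ) (hh : h ≠ 0) :
    (∫ w₁ in (-1 : ℝ)..1, ∫ w₂ in (-1 : ℝ)..1,
          (4 * h ^ 2 / w₁ ^ 2) * Real.sin (w₁ / h) ^ 2 *
            (1 + w₁ ^ 2 / h ^ 2) ^ 2 * (1 + w₂ ^ 2 / h ^ 2) ^ 2)
      = (4*h^2 * (∫ w in (-1:ℝ)..1, Real.sin (w/h)^2/w^2)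
          + 8 * (1 - h/2 * Real.sin (2/h))
          + 4/h^2 * (1/3 - h/2 * Real.sin (2/h) - h^2/2 * Real.cos (2/h)
              + h^3/4 * Real.sin (2/h)))
        * (2 + 4/(3*h^2) + 2/(5*h^4)) := by
  have inner : ∀ w₁ : ℝ, (∫ w₂ in (-1 : ℝ)..1,
      (4 * h ^ 2 / w₁ ^ 2) * Real.sin (w₁ / h) ^ 2 *
        (1 + w₁ ^ 2 / h ^ 2) ^ 2 * (1 + w₂ ^ 2 / h ^ 2) ^ 2)
      = ((4 * h ^ 2 / w₁ ^ 2) * Real.sin (w₁ / h) ^ 2 * (1 + w₁ ^ 2 / h ^ 2) ^ 2)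
        * (2 + 4/(3*h^2) + 2/(5*h^4)) := by
    intro w₁
    rw [intervalIntegral.integral_const_mul, intG_A3 h hh]
  rw [intervalIntegral.integral_congr (g := fun w₁ =>
      ((4 * h ^ 2 / w₁ ^ 2) * Real.sin (w₁ / h) ^ 2 * (1 + w₁ ^ 2 / h ^ 2) ^ 2)
        * (2 + 4/(3*h^2) + 2/(5*h^4))) (fun w₁ _ => inner w₁),
    intervalIntegral.integral_mul_const]
  congr 1
  have split : Set.EqOn (fun w₁ : ℝ =>
      (4 * h ^ 2 / w₁ ^ 2) * Real.sin (w₁ / h) ^ 2 * (1 + w₁ ^ 2 / h ^ 2) ^ 2)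
      (fun w₁ : ℝ => 4*h^2 * (Real.sin (w₁/h)^2/w₁^2) + 8 * Real.sin (w₁/h)^2
        + 4/h^2 * (w₁^2 * Real.sin (w₁/h)^2)) (Set.uIcc (-1:ℝ) 1) := by
    intro w _
    rcases eq_or_ne w 0 with rfl|hw
    · simp
    · field_simp
      ring
  have i1 : IntervalIntegrable (fun w₁ : ℝ => 4*h^2 * (Real.sin (w₁/h)^2/w₁^2))
      volume (-1) 1 := (intble_sinc_A3 h).const_mul _
  have i2 : IntervalIntegrable (fun w₁ : ℝ => 8 * Real.sin (w₁/h)^2) volume (-1) 1 :=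
    ((by fun_prop : Continuous fun w₁ : ℝ => 8 * Real.sin (w₁/h)^2).intervalIntegrable _ _)
  have i3 : IntervalIntegrable (fun w₁ : ℝ => 4/h^2 * (w₁^2 * Real.sin (w₁/h)^2))
      volume (-1) 1 :=
    ((by fun_prop :
      Continuous fun w₁ : ℝ => 4/h^2 * (w₁^2 * Real.sin (w₁/h)^2)).intervalIntegrable _ _)
  rw [intervalIntegral.integral_congr split,
    intervalIntegral.integral_add (i1.add i2) i3,
    intervalIntegral.integral_add i1 i2,
    intervalIntegral.integral_const_mul, intervalIntegral.integral_const_mul,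
    intervalIntegral.integral_const_mul, intB_A3 h hh, intC_A3 h hh]

/-- As `h → 0⁺`,
`∫_{[-1,1]²} (4h²/w₁²) sin²(w₁/h)(1+w₁²/h²)²(1+w₂²/h²)² dw = 8/(15h⁶) + o(h⁻⁶)`. -/
theorem integral_example_A3 :
    (fun h : ℝ =>
        (∫ w₁ in (-1 : ℝ)..1, ∫ w₂ in (-1 : ℝ)..1,
          (4 * h ^ 2 / w₁ ^ 2) * Real.sin (w₁ / h) ^ 2 *
            (1 + w₁ ^ 2 / h ^ 2) ^ 2 * (1 + w₂ ^ 2 / h ^ 2) ^ 2)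
        - 8 / (15 * h ^ 6))
      =o[nhdsWithin 0 (Set.Ioi 0)] (fun h : ℝ => 1 / h ^ 6) := by
  set l := nhdsWithin (0:ℝ) (Set.Ioi 0) with hl
  rw [Asymptotics.isLittleO_iff_tendsto]
  · have habs : ∀ x : ℝ, |Real.sin (2/x)| ≤ 1 := fun x => Real.abs_sin_le_one _
    have habsc : ∀ x : ℝ, |Real.cos (2/x)| ≤ 1 := fun x => Real.abs_cos_le_one _
    have hone : ∀ x : ℝ, |(1:ℝ)| ≤ 1 := fun _ => by norm_num
    have e2 : Filter.Tendsto (fun h : ℝ => 8 * h^2 * (1:ℝ)) l (nhds 0) :=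
      tendsto_pow_mul_bdd_A3 2 (by norm_num) 8 (fun _ => 1) hone
    have t1 : Filter.Tendsto (fun h : ℝ =>
        4*h^2*h^2 * (∫ w in (-1:ℝ)..1, Real.sin (w/h)^2/w^2)) l (nhds 0) := by
      apply squeeze_zero' ?_ ?_ e2
      · filter_upwards with h
        exact mul_nonneg (by positivity) (A_nonneg_A3 h)
      · filter_upwards [self_mem_nhdsWithin] with h hh
        have hne : h ≠ 0 := ne_of_gt hh
        calc 4*h^2*h^2 * (∫ w in (-1:ℝ)..1, Real.sin (w/h)^2/w^2)
            ≤ 4*h^2*h^2 * (2/h^2) := by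
              apply mul_le_mul_of_nonneg_left (A_le_A3 h) (by positivity)
        _ = 8 * h^2 * 1 := by field_simp; ring
    have t2 : Filter.Tendsto (fun h : ℝ => 4 * h^3 * Real.sin (2/h)) l (nhds 0) :=
      tendsto_pow_mul_bdd_A3 3 (by norm_num) 4 _ habs
    have t3 : Filter.Tendsto (fun h : ℝ => 2 * h^1 * Real.sin (2/h)) l (nhds 0) :=
      tendsto_pow_mul_bdd_A3 1 (by norm_num) 2 _ habs
    have t4 : Filter.Tendsto (fun h : ℝ => 2 * h^2 * Real.cos (2/h)) l (nhds 0) :=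
      tendsto_pow_mul_bdd_A3 2 (by norm_num) 2 _ habsc
    have t5 : Filter.Tendsto (fun h : ℝ => 1 * h^3 * Real.sin (2/h)) l (nhds 0) :=
      tendsto_pow_mul_bdd_A3 3 (by norm_num) 1 _ habs
    have hfac1 : Filter.Tendsto (fun h : ℝ =>
        (4*h^2*h^2 * (∫ w in (-1:ℝ)..1, Real.sin (w/h)^2/w^2)
          + (8 * h^2 * 1 - 4 * h^3 * Real.sin (2/h)))
          + (((4/3 - 2 * h^1 * Real.sin (2/h)) - 2 * h^2 * Real.cos (2/h))
              + 1 * h^3 * Real.sin (2/h))) l (nhds (4/3)) := by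
      have := (t1.add (e2.sub t2)).add
        (((tendsto_const_nhds (x := (4:ℝ)/3) (f := l)).sub t3).sub t4 |>.add t5)
      simpa using this
    have hfac2 : Filter.Tendsto (fun h : ℝ => 2*h^4 + 4/3*h^2 + 2/5) l (nhds (2/5)) := by
      have hcont : Continuous (fun h : ℝ => 2*h^4 + 4/3*h^2 + 2/5) := by fun_prop
      have := hcont.tendsto (0:ℝ)
      norm_num at this
      exact this.mono_left nhdsWithin_le_nhds
    have hmain := (hfac1.mul hfac2).sub_const (8/15)
    norm_num at hmain
    apply hmain.congr'
    filter_upwards [self_mem_nhdsWithin] with h hh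
    have hne : h ≠ 0 := ne_of_gt hh
    rw [factor_A3 h hne]
    field_simp
    ring
  · intro x hx
    have hx0 : x = 0 := by
      have := div_eq_zero_iff.mp hx
      rcases this with h | h
      · norm_num at h
      · exact pow_eq_zero_iff (n := 6) (by norm_num) |>.mp h
    subst hx0
    norm_num
end

section
/- As h → 0⁺, the integral (∫_{[-1,1]} (4h²/w²) sin²(w/h)(1 + w²/h²)² dw)² equals 16/(9h⁴) + o(h⁻⁴). -/
open Asymptotics Filter

lemma t1_bound {h : ℝ} (h0 : 0 < h) (w : ℝ) :
    |4 * h ^ 2 * Real.sin (w / h) ^ 2 / w ^ 2| ≤ 4 := by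
  rcases eq_or_ne w 0 with rfl | hw
  · simp
  · rw [abs_of_nonneg (by positivity)]
    rw [div_le_iff₀ (by positivity)]
    have hs := Real.sin_sq_le_sq (x := w / h)
    rw [div_pow] at hs
    have heq : 4 * h ^ 2 * (w ^ 2 / h ^ 2) = 4 * w ^ 2 := by
      field_simp
    nlinarith [sq_nonneg w, sq_nonneg h, h0, hs, heq]

lemma ht1 {h : ℝ} (h0 : 0 < h) :
    IntervalIntegrable (fun w => 4 * h ^ 2 * Real.sin (w / h) ^ 2 / w ^ 2)
      MeasureTheory.volume (-1 : ℝ) 1 := by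
  rw [intervalIntegrable_iff]
  apply MeasureTheory.Measure.integrableOn_of_bounded (M := 4)
  · exact (measure_Ioc_lt_top (μ := MeasureTheory.volume)).ne
  · apply Measurable.aestronglyMeasurable
    fun_prop
  · exact MeasureTheory.ae_of_all _ fun w => by
      rw [Real.norm_eq_abs]; exact t1_bound h0 w

lemma key {h : ℝ} (h0 : 0 < h) (h1 : h ≤ 1) :
    |(∫ w in (-1 : ℝ)..1,
        (4 * h ^ 2 / w ^ 2) * Real.sin (w / h) ^ 2 * (1 + w ^ 2 / h ^ 2) ^ 2)
      - 4 / (3 * h ^ 2)| ≤ 30 / h := by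
  have hne : h ≠ 0 := h0.ne'
  -- split integrand
  have hid : ∀ w : ℝ,
      (4 * h ^ 2 / w ^ 2) * Real.sin (w / h) ^ 2 * (1 + w ^ 2 / h ^ 2) ^ 2
        = 4 * h ^ 2 * Real.sin (w / h) ^ 2 / w ^ 2
          + 8 * Real.sin (w / h) ^ 2
          + 4 * w ^ 2 * Real.sin (w / h) ^ 2 / h ^ 2 := by
    intro w
    rcases eq_or_ne w 0 with rfl | hw
    · simp
    · field_simp
      ring
  have i1 := ht1 h0
  have i2 : IntervalIntegrable (fun w => 8 * Real.sin (w / h) ^ 2)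
      MeasureTheory.volume (-1 : ℝ) 1 := (by fun_prop : Continuous _).intervalIntegrable _ _
  have i3 : IntervalIntegrable (fun w : ℝ => 4 * w ^ 2 * Real.sin (w / h) ^ 2 / h ^ 2)
      MeasureTheory.volume (-1 : ℝ) 1 := (by fun_prop : Continuous _).intervalIntegrable _ _
  have hsplit :
      (∫ w in (-1 : ℝ)..1,
        (4 * h ^ 2 / w ^ 2) * Real.sin (w / h) ^ 2 * (1 + w ^ 2 / h ^ 2) ^ 2)
      = (∫ w in (-1 : ℝ)..1, 4 * h ^ 2 * Real.sin (w / h) ^ 2 / w ^ 2)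
        + (∫ w in (-1 : ℝ)..1, 8 * Real.sin (w / h) ^ 2)
        + (∫ w in (-1 : ℝ)..1, 4 * w ^ 2 * Real.sin (w / h) ^ 2 / h ^ 2) := by
    rw [intervalIntegral.integral_congr (g := fun w =>
        4 * h ^ 2 * Real.sin (w / h) ^ 2 / w ^ 2 + 8 * Real.sin (w / h) ^ 2
          + 4 * w ^ 2 * Real.sin (w / h) ^ 2 / h ^ 2) (fun w _ => hid w),
      intervalIntegral.integral_add (i1.add i2) i3,
      intervalIntegral.integral_add i1 i2]
  -- third integral
  have hsinsq : ∀ w : ℝ, 4 * w ^ 2 * Real.sin (w / h) ^ 2 / h ^ 2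
      = (2 / h ^ 2) * w ^ 2 - (2 / h ^ 2) * (w ^ 2 * Real.cos (2 * (w / h))) := by
    intro w
    rw [Real.sin_sq_eq_half_sub]
    ring
  have c1 : IntervalIntegrable (fun w : ℝ => (2 / h ^ 2) * w ^ 2)
      MeasureTheory.volume (-1 : ℝ) 1 := (by fun_prop : Continuous _).intervalIntegrable _ _
  have c2 : IntervalIntegrable (fun w : ℝ => (2 / h ^ 2) * (w ^ 2 * Real.cos (2 * (w / h))))
      MeasureTheory.volume (-1 : ℝ) 1 := (by fun_prop : Continuous _).intervalIntegrable _ _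
  have h3 : (∫ w in (-1 : ℝ)..1, 4 * w ^ 2 * Real.sin (w / h) ^ 2 / h ^ 2)
      = 4 / (3 * h ^ 2)
        - (2 / h ^ 2) * (∫ w in (-1 : ℝ)..1, w ^ 2 * Real.cos (2 * (w / h))) := by
    rw [intervalIntegral.integral_congr (g := fun w =>
        (2 / h ^ 2) * w ^ 2 - (2 / h ^ 2) * (w ^ 2 * Real.cos (2 * (w / h))))
        (fun w _ => hsinsq w),
      intervalIntegral.integral_sub c1 c2,
      intervalIntegral.integral_const_mul, intervalIntegral.integral_const_mul,
      integral_pow]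
    norm_num
    ring
  -- integration by parts for J
  set J := ∫ w in (-1 : ℝ)..1, w ^ 2 * Real.cos (2 * (w / h)) with hJdef
  have hIBP : J = Real.sin (2 * (1 / h)) * (h / 2)
      - Real.sin (2 * (-1 / h)) * (h / 2)
      - ∫ w in (-1 : ℝ)..1, (2 * w) * (Real.sin (2 * (w / h)) * (h / 2)) := by
    have := intervalIntegral.integral_mul_deriv_eq_deriv_mul
      (u := fun w : ℝ => w ^ 2) (v := fun w => Real.sin (2 * (w / h)) * (h / 2))
      (u' := fun w : ℝ => 2 * w) (v' := fun w => Real.cos (2 * (w / h)))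
      (a := (-1 : ℝ)) (b := 1)
      (fun x _ => by simpa using (hasDerivAt_pow 2 x))
      (fun x _ => by
        have hd : HasDerivAt (fun w : ℝ => Real.sin (2 * (w / h)))
            (Real.cos (2 * (x / h)) * (2 / h)) x := by
          have hlin : HasDerivAt (fun w : ℝ => 2 * (w / h)) (2 / h) x := by
            exact (((hasDerivAt_id x).div_const h).const_mul (2 : ℝ)).congr_deriv (by ring)
          exact (Real.hasDerivAt_sin (2 * (x / h))).comp x hlin
        have := hd.mul_const (h / 2)
        convert this using 1
        field_simp)
      ((by fun_prop : Continuous _).intervalIntegrable _ _)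
      ((by fun_prop : Continuous _).intervalIntegrable _ _)
    simpa using this
  have hJ : |J| ≤ 3 * h := by
    rw [hIBP]
    have hb : |∫ w in (-1 : ℝ)..1, (2 * w) * (Real.sin (2 * (w / h)) * (h / 2))| ≤ 2 * h := by
      have := intervalIntegral.norm_integral_le_of_norm_le_const
        (C := h) (f := fun w : ℝ => (2 * w) * (Real.sin (2 * (w / h)) * (h / 2)))
        (a := -1) (b := 1) ?_
      · rw [Real.norm_eq_abs] at this
        calc |∫ w in (-1 : ℝ)..1, (2 * w) * (Real.sin (2 * (w / h)) * (h / 2))|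
            ≤ h * |1 - (-1 : ℝ)| := this
          _ = 2 * h := by rw [show |1 - (-1 : ℝ)| = 2 by norm_num]; ring
      · intro x hx
        have hx' : |x| ≤ 1 := by
          rw [Set.uIoc_of_le (by norm_num : (-1:ℝ) ≤ 1)] at hx
          rw [abs_le]; exact ⟨hx.1.le, hx.2⟩
        rw [Real.norm_eq_abs, abs_mul, abs_mul, abs_mul]
        have hs : |Real.sin (2 * (x / h))| ≤ 1 := Real.abs_sin_le_one _
        have : |(2:ℝ)| * |x| ≤ 2 := by rw [abs_two]; nlinarith
        calc |(2:ℝ)| * |x| * (|Real.sin (2 * (x / h))| * |h / 2|)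
            ≤ 2 * (1 * (h / 2)) := by
              apply mul_le_mul this
              · apply mul_le_mul hs (le_of_eq (abs_of_nonneg (by positivity))) (abs_nonneg _)
                  (by norm_num)
              · positivity
              · norm_num
          _ = h := by ring
    have hs1 : |Real.sin (2 * (1 / h)) * (h / 2)| ≤ h / 2 := by
      rw [abs_mul]
      calc |Real.sin (2 * (1 / h))| * |h / 2| ≤ 1 * (h / 2) := by
            apply mul_le_mul (Real.abs_sin_le_one _)
              (le_of_eq (abs_of_nonneg (by positivity))) (abs_nonneg _) (by norm_num)
        _ = h / 2 := by ring
    have hs2 : |Real.sin (2 * (-1 / h)) * (h / 2)| ≤ h / 2 := by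
      rw [abs_mul]
      calc |Real.sin (2 * (-1 / h))| * |h / 2| ≤ 1 * (h / 2) := by
            apply mul_le_mul (Real.abs_sin_le_one _)
              (le_of_eq (abs_of_nonneg (by positivity))) (abs_nonneg _) (by norm_num)
        _ = h / 2 := by ring
    calc |Real.sin (2 * (1 / h)) * (h / 2) - Real.sin (2 * (-1 / h)) * (h / 2)
          - ∫ w in (-1 : ℝ)..1, (2 * w) * (Real.sin (2 * (w / h)) * (h / 2))|
        ≤ |Real.sin (2 * (1 / h)) * (h / 2)| + |Real.sin (2 * (-1 / h)) * (h / 2)|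
          + |∫ w in (-1 : ℝ)..1, (2 * w) * (Real.sin (2 * (w / h)) * (h / 2))| := by
          exact (abs_sub _ _).trans (by gcongr; exact abs_sub _ _)
      _ ≤ h / 2 + h / 2 + 2 * h := by gcongr
      _ = 3 * h := by ring
  -- bounds on first two integrals
  have hB1 : |∫ w in (-1 : ℝ)..1, 4 * h ^ 2 * Real.sin (w / h) ^ 2 / w ^ 2| ≤ 8 := by
    have := intervalIntegral.norm_integral_le_of_norm_le_const (C := 4)
      (f := fun w : ℝ => 4 * h ^ 2 * Real.sin (w / h) ^ 2 / w ^ 2) (a := -1) (b := 1)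
      (fun x _ => by rw [Real.norm_eq_abs]; exact t1_bound h0 x)
    rw [Real.norm_eq_abs] at this
    calc _ ≤ (4:ℝ) * |1 - (-1:ℝ)| := this
      _ = 8 := by norm_num
  have hB2 : |∫ w in (-1 : ℝ)..1, 8 * Real.sin (w / h) ^ 2| ≤ 16 := by
    have := intervalIntegral.norm_integral_le_of_norm_le_const (C := 8)
      (f := fun w : ℝ => 8 * Real.sin (w / h) ^ 2) (a := -1) (b := 1)
      (fun x _ => by
        rw [Real.norm_eq_abs, abs_of_nonneg (by positivity)]
        nlinarith [Real.sin_sq_le_one (x / h)])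
    rw [Real.norm_eq_abs] at this
    calc _ ≤ (8:ℝ) * |1 - (-1:ℝ)| := this
      _ = 16 := by norm_num
  have hB3 : |(2 / h ^ 2) * J| ≤ 6 / h := by
    rw [abs_mul, abs_of_nonneg (by positivity : (0:ℝ) ≤ 2 / h ^ 2)]
    calc (2 / h ^ 2) * |J| ≤ (2 / h ^ 2) * (3 * h) := by gcongr
      _ = 6 / h := by field_simp; ring
  rw [hsplit, h3]
  have : (∫ w in (-1 : ℝ)..1, 4 * h ^ 2 * Real.sin (w / h) ^ 2 / w ^ 2)
        + (∫ w in (-1 : ℝ)..1, 8 * Real.sin (w / h) ^ 2)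
        + (4 / (3 * h ^ 2) - 2 / h ^ 2 * J) - 4 / (3 * h ^ 2)
      = (∫ w in (-1 : ℝ)..1, 4 * h ^ 2 * Real.sin (w / h) ^ 2 / w ^ 2)
        + (∫ w in (-1 : ℝ)..1, 8 * Real.sin (w / h) ^ 2) - 2 / h ^ 2 * J := by ring
  rw [this]
  have h24 : (24:ℝ) ≤ 24 / h := by
    rw [le_div_iff₀ h0]; nlinarith
  calc _ ≤ |(∫ w in (-1 : ℝ)..1, 4 * h ^ 2 * Real.sin (w / h) ^ 2 / w ^ 2)
        + (∫ w in (-1 : ℝ)..1, 8 * Real.sin (w / h) ^ 2)| + |2 / h ^ 2 * J| :=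
        abs_sub _ _
    _ ≤ (|∫ w in (-1 : ℝ)..1, 4 * h ^ 2 * Real.sin (w / h) ^ 2 / w ^ 2|
        + |∫ w in (-1 : ℝ)..1, 8 * Real.sin (w / h) ^ 2|) + |2 / h ^ 2 * J| := by
        gcongr; exact abs_add_le _ _
    _ ≤ (8 + 16) + 6 / h := by gcongr
    _ = 24 + 6 / h := by norm_num
    _ ≤ 24 / h + 6 / h := add_le_add h24 le_rfl
    _ = 30 / h := by ring

/-- As `h → 0⁺`, `(∫_{[-1,1]} (4h²/w²) sin²(w/h)(1+w²/h²)² dw)² = 16/(9h⁴) + o(h⁻⁴)`. -/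
theorem integral_example_A5 :
    (fun h : ℝ =>
        (∫ w in (-1 : ℝ)..1,
          (4 * h ^ 2 / w ^ 2) * Real.sin (w / h) ^ 2 * (1 + w ^ 2 / h ^ 2) ^ 2) ^ 2
        - 16 / (9 * h ^ 4))
      =o[nhdsWithin 0 (Set.Ioi 0)] (fun h : ℝ => 1 / h ^ 4) := by
  rw [isLittleO_iff]
  intro c hc
  have hmem : Set.Ioo (0:ℝ) (min 1 (c / 980)) ∈ nhdsWithin 0 (Set.Ioi 0) :=
    Ioo_mem_nhdsGT_of_mem ⟨le_refl 0, lt_min one_pos (by positivity)⟩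
  filter_upwards [hmem] with h hh
  obtain ⟨h0, hlt⟩ := hh
  have h1 : h ≤ 1 := le_of_lt (lt_of_lt_of_le hlt (min_le_left _ _))
  have hc' : h < c / 980 := lt_of_lt_of_le hlt (min_le_right _ _)
  have hne : h ≠ 0 := h0.ne'
  set I := ∫ w in (-1 : ℝ)..1,
      (4 * h ^ 2 / w ^ 2) * Real.sin (w / h) ^ 2 * (1 + w ^ 2 / h ^ 2) ^ 2 with hI
  have hkey : |I - 4 / (3 * h ^ 2)| ≤ 30 / h := key h0 h1
  have hfac : I ^ 2 - 16 / (9 * h ^ 4)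
      = (I - 4 / (3 * h ^ 2)) * ((I - 4 / (3 * h ^ 2)) + 8 / (3 * h ^ 2)) := by
    field_simp
    ring
  rw [Real.norm_eq_abs, Real.norm_eq_abs, hfac]
  have hb : |(I - 4 / (3 * h ^ 2)) * ((I - 4 / (3 * h ^ 2)) + 8 / (3 * h ^ 2))|
      ≤ (30 / h) * (30 / h + 8 / (3 * h ^ 2)) := by
    rw [abs_mul]
    apply mul_le_mul hkey _ (abs_nonneg _) (by positivity)
    calc |(I - 4 / (3 * h ^ 2)) + 8 / (3 * h ^ 2)|
        ≤ |I - 4 / (3 * h ^ 2)| + |8 / (3 * h ^ 2)| := abs_add_le _ _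
      _ ≤ 30 / h + 8 / (3 * h ^ 2) := by
          gcongr
          rw [abs_of_nonneg (by positivity)]
  refine hb.trans ?_
  have he : (30 / h) * (30 / h + 8 / (3 * h ^ 2)) = (900 * h ^ 2 + 80 * h) / h ^ 4 := by
    field_simp
    ring
  have habs : |1 / h ^ 4| = 1 / h ^ 4 := abs_of_nonneg (by positivity)
  rw [he, habs]
  have : c * (1 / h ^ 4) = c / h ^ 4 := by ring
  rw [this, div_le_div_iff_of_pos_right (by positivity)]
  have h980 : 980 * h < c := by
    rw [lt_div_iff₀ (by norm_num : (0:ℝ) < 980)] at hc'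
    linarith
  nlinarith
end
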